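/- Let A be a real d×n matrix, b ∈ ℝ^d, P a real m×n matrix, M > 0, R ≥ 1/(2M), and let f : ℝ → ℝ be convex, three times differentiable with continuous third derivative, and M-quasi-self-concordant. Let F(y) = ∑_{i=1}^m f(y_i), let x* minimize F(Px) over {x : Ax = b} with ‖Px*‖_∞ ≤ R, and let x ∈ ℝ^n satisfy Ax = b and ‖Px‖_∞ ≤ R. Define res_x(Δ) = ∑_i f'((Px)_i)(PΔ)_i − (2e)^{−1}∑_i f''((Px)_i)(PΔ)_i². Then sup{ res_x(Δ) : AΔ = 0, ‖PΔ − z(x)‖_∞ ≤ 1/(2M) } ≥ (1/(4MR))·( F(Px) − F(Px*) ). -/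

import Mathlib

lemma qsc_nonneg {g : ℝ → ℝ} {M : ℝ} (hM : 0 < M)
    (hqsc : ∀ s, |deriv g s| ≤ M * g s) (s : ℝ) : 0 ≤ g s :=
  nonneg_of_mul_nonneg_right ((abs_nonneg _).trans (hqsc s)) hM

lemma gron {g : ℝ → ℝ} {M : ℝ} (hM : 0 < M) (hdg : Differentiable ℝ g)
    (hqsc : ∀ s, |deriv g s| ≤ M * g s) (a s : ℝ) :
    g a * Real.exp (-(M * |s - a|)) ≤ g s := by
  rcases le_total a s with hle | hle
  · have hh : ∀ t, HasDerivAt (fun t => g t * Real.exp (M * t))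
        (deriv g t * Real.exp (M * t) + g t * (Real.exp (M * t) * (M * 1))) t := by
      intro t
      exact (hdg t).hasDerivAt.mul
        ((Real.hasDerivAt_exp (M * t)).comp t ((hasDerivAt_id t).const_mul M))
    have hmono : Monotone (fun t => g t * Real.exp (M * t)) := by
      apply monotone_of_hasDerivAt_nonneg hh
      intro t
      simp only [Pi.zero_apply]
      have h1 : -(M * g t) ≤ deriv g t := neg_le_of_abs_le (hqsc t)
      have h2 : (0:ℝ) < Real.exp (M * t) := Real.exp_pos _
      nlinarith
    have hms := hmono hle
    simp only at hms
    have habs : |s - a| = s - a := abs_of_nonneg (by linarith)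
    rw [habs]
    have e1 : g a * Real.exp (M * a) * Real.exp (-(M * s)) = g a * Real.exp (-(M * (s - a))) := by
      rw [mul_assoc, ← Real.exp_add]; congr 1; ring
    have e2 : g s * Real.exp (M * s) * Real.exp (-(M * s)) = g s := by
      rw [mul_assoc, ← Real.exp_add]; simp
    calc g a * Real.exp (-(M * (s - a))) = g a * Real.exp (M * a) * Real.exp (-(M * s)) := e1.symm
      _ ≤ g s * Real.exp (M * s) * Real.exp (-(M * s)) :=
          mul_le_mul_of_nonneg_right hms (Real.exp_pos _).le
      _ = g s := e2
  · have hh : ∀ t, HasDerivAt (fun t => g t * Real.exp (-(M * t)))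
        (deriv g t * Real.exp (-(M * t)) + g t * (Real.exp (-(M * t)) * (-(M * 1)))) t := by
      intro t
      exact (hdg t).hasDerivAt.mul
        (by have h := (Real.hasDerivAt_exp (-(M * t))).comp t (((hasDerivAt_id t).const_mul M).neg)
            exact h)
    have hanti : Antitone (fun t => g t * Real.exp (-(M * t))) := by
      apply antitone_of_hasDerivAt_nonpos hh
      intro t
      simp only [Pi.zero_apply]
      have h1 : deriv g t ≤ M * g t := le_of_abs_le (hqsc t)
      have h2 : (0:ℝ) < Real.exp (-(M * t)) := Real.exp_pos _
      nlinarith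
    have hms := hanti hle
    simp only at hms
    have habs : |s - a| = a - s := by rw [abs_sub_comm]; exact abs_of_nonneg (by linarith)
    rw [habs]
    have e1 : g a * Real.exp (-(M * a)) * Real.exp (M * s) = g a * Real.exp (-(M * (a - s))) := by
      rw [mul_assoc, ← Real.exp_add]; congr 1; ring
    have e2 : g s * Real.exp (-(M * s)) * Real.exp (M * s) = g s := by
      rw [mul_assoc, ← Real.exp_add]; simp
    calc g a * Real.exp (-(M * (a - s))) = g a * Real.exp (-(M * a)) * Real.exp (M * s) := e1.symm
      _ ≤ g s * Real.exp (-(M * s)) * Real.exp (M * s) :=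
          mul_le_mul_of_nonneg_right hms (Real.exp_pos _).le
      _ = g s := e2

lemma taylor_lb {f : ℝ → ℝ} {M : ℝ} (hM : 0 < M) (hf : ContDiff ℝ 3 f)
    (hqsc : ∀ s, |deriv (deriv (deriv f)) s| ≤ M * deriv (deriv f) s)
    (a t : ℝ) (ht : |t| ≤ 1 / (2 * M)) :
    f a + deriv f a * t + (2 * Real.exp 1)⁻¹ * (deriv (deriv f) a * t ^ 2) ≤ f (a + t) := by
  -- differentiability
  have h3 : ContDiff ℝ ((2:ℕ) + 1) f := by exact_mod_cast hf
  rw [contDiff_succ_iff_deriv] at h3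
  have h2 : ContDiff ℝ ((1:ℕ) + 1) (deriv f) := by exact_mod_cast h3.2.2
  rw [contDiff_succ_iff_deriv] at h2
  have h1 : ContDiff ℝ ((0:ℕ) + 1) (deriv (deriv f)) := by exact_mod_cast h2.2.2
  rw [contDiff_succ_iff_deriv] at h1
  have hd0 : Differentiable ℝ f := h3.1
  have hd1 : Differentiable ℝ (deriv f) := h2.1
  have hd2 : Differentiable ℝ (deriv (deriv f)) := h1.1
  have hg0 : ∀ s, 0 ≤ deriv (deriv f) s := fun s =>
    nonneg_of_mul_nonneg_right ((abs_nonneg _).trans (hqsc s)) hM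
  set F1 := deriv f
  set F2 := deriv (deriv f)
  -- the comparison function
  set φ : ℝ → ℝ := fun s => f (a + s) - (f a + F1 a * s + (2 * Real.exp 1)⁻¹ * (F2 a * s ^ 2))
    with hφdef
  set ψ : ℝ → ℝ := fun s => F1 (a + s) - (F1 a + (2 * Real.exp 1)⁻¹ * (F2 a * (2 * s)))
    with hψdef
  have hφ : ∀ s, HasDerivAt φ (ψ s) s := by
    intro s
    have h1' : HasDerivAt (fun s => f (a + s)) (F1 (a + s)) s := by
      simpa [Function.comp_def] using ((hd0 (a + s)).hasDerivAt).comp s ((hasDerivAt_id s).const_add a)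
    have h2' : HasDerivAt (fun s : ℝ => f a + F1 a * s + (2 * Real.exp 1)⁻¹ * (F2 a * s ^ 2))
        (0 + F1 a * 1 + (2 * Real.exp 1)⁻¹ * (F2 a * (↑2 * s ^ 1 * 1))) s := by
      exact ((hasDerivAt_const s (f a)).add ((hasDerivAt_id s).const_mul (F1 a))).add
        ((((hasDerivAt_id s).pow 2).const_mul (F2 a)).const_mul (2 * Real.exp 1)⁻¹)
    have := h1'.sub h2'
    refine this.congr_deriv ?_
    simp only [hψdef]
    push_cast
    ring
  have hψ : ∀ s, HasDerivAt ψ (F2 (a + s) - (2 * Real.exp 1)⁻¹ * (F2 a * 2)) s := by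
    intro s
    have h1' : HasDerivAt (fun s => F1 (a + s)) (F2 (a + s)) s := by
      simpa [Function.comp_def] using ((hd1 (a + s)).hasDerivAt).comp s ((hasDerivAt_id s).const_add a)
    have h2' : HasDerivAt (fun s : ℝ => F1 a + (2 * Real.exp 1)⁻¹ * (F2 a * (2 * s)))
        (0 + (2 * Real.exp 1)⁻¹ * (F2 a * (2 * 1))) s := by
      exact (hasDerivAt_const s (F1 a)).add
        ((((hasDerivAt_id s).const_mul 2).const_mul (F2 a)).const_mul (2 * Real.exp 1)⁻¹)
    have := h1'.sub h2'
    refine this.congr_deriv ?_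
    ring
  -- second derivative nonneg on the band
  have hψ'nonneg : ∀ s : ℝ, |s| ≤ 1 / (2 * M) →
      0 ≤ F2 (a + s) - (2 * Real.exp 1)⁻¹ * (F2 a * 2) := by
    intro s hs
    have hgron : F2 a * Real.exp (-(M * |a + s - a|)) ≤ F2 (a + s) :=
      gron hM hd2 hqsc a (a + s)
    have habs : |a + s - a| = |s| := by congr 1; ring
    rw [habs] at hgron
    have hexp : Real.exp (-1 : ℝ) ≤ Real.exp (-(M * |s|)) := by
      apply Real.exp_le_exp.mpr
      have : M * |s| ≤ M * (1 / (2 * M)) := mul_le_mul_of_nonneg_left hs hM.le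
      have h' : M * (1 / (2 * M)) = 1 / 2 := by field_simp
      nlinarith
    have h2e : (2 * Real.exp 1)⁻¹ * (F2 a * 2) = F2 a * Real.exp (-1 : ℝ) := by
      rw [Real.exp_neg]
      field_simp
    rw [h2e]
    have := mul_le_mul_of_nonneg_left hexp (hg0 a)
    linarith [this, hgron]
  -- monotonicity of ψ on the band
  have hc : (0:ℝ) < 1 / (2 * M) := by positivity
  have hψmono : MonotoneOn ψ (Set.Icc (-(1 / (2 * M))) (1 / (2 * M))) := by
    apply monotoneOn_of_hasDerivWithinAt_nonneg (convex_Icc _ _)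
      (fun s _ => ((hψ s).continuousAt.continuousWithinAt))
      (fun s _ => (hψ s).hasDerivWithinAt)
    intro s hs
    rw [interior_Icc] at hs
    exact hψ'nonneg s (abs_le.mpr ⟨hs.1.le, hs.2.le⟩)
  have hψ0 : ψ 0 = 0 := by simp [hψdef]
  have hmem0 : (0:ℝ) ∈ Set.Icc (-(1 / (2 * M))) (1 / (2 * M)) := by
    constructor <;> linarith
  rcases le_total 0 t with h0t | ht0
  · have hφmono : MonotoneOn φ (Set.Icc 0 (1 / (2 * M))) := by
      apply monotoneOn_of_hasDerivWithinAt_nonneg (convex_Icc _ _)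
        (fun s _ => ((hφ s).continuousAt.continuousWithinAt))
        (fun s _ => (hφ s).hasDerivWithinAt)
      intro s hs
      rw [interior_Icc] at hs
      have hsmem : s ∈ Set.Icc (-(1 / (2 * M))) (1 / (2 * M)) := by
        constructor <;> [linarith [hs.1]; exact hs.2.le]
      have := hψmono hmem0 hsmem hs.1.le
      rw [hψ0] at this
      exact this
    have hmt : t ∈ Set.Icc (0:ℝ) (1 / (2 * M)) := ⟨h0t, (abs_le.mp ht).2⟩
    have h := hφmono (Set.left_mem_Icc.mpr hc.le) hmt h0t
    simp only [hφdef] at h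
    simp only [mul_zero, ne_eq, OfNat.ofNat_ne_zero, not_false_eq_true, zero_pow,
      add_zero, sub_self] at h
    linarith [h]
  · have hφanti : AntitoneOn φ (Set.Icc (-(1 / (2 * M))) 0) := by
      apply antitoneOn_of_hasDerivWithinAt_nonpos (convex_Icc _ _)
        (fun s _ => ((hφ s).continuousAt.continuousWithinAt))
        (fun s _ => (hφ s).hasDerivWithinAt)
      intro s hs
      rw [interior_Icc] at hs
      have hsmem : s ∈ Set.Icc (-(1 / (2 * M))) (1 / (2 * M)) := by
        constructor <;> [exact hs.1.le; linarith [hs.2]]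
      have := hψmono hsmem hmem0 hs.2.le
      rw [hψ0] at this
      exact this
    have hmt : t ∈ Set.Icc (-(1 / (2 * M))) (0:ℝ) := ⟨(abs_le.mp ht).1, ht0⟩
    have h := hφanti hmt (Set.right_mem_Icc.mpr (by linarith)) ht0
    simp only [hφdef] at h
    simp only [mul_zero, ne_eq, OfNat.ofNat_ne_zero, not_false_eq_true, zero_pow,
      add_zero, sub_self] at h
    linarith [h]

lemma coord_ineq {f : ℝ → ℝ} {M R : ℝ} (hM : 0 < M) (hR : 1 / (2 * M) ≤ R)
    (hconv : ConvexOn ℝ Set.univ f) (hf : ContDiff ℝ 3 f)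
    (hqsc : ∀ s, |deriv (deriv (deriv f)) s| ≤ M * deriv (deriv f) s)
    {a b : ℝ} (ha : |a| ≤ R) (hb : |b| ≤ R) :
    1 / (4 * M * R) * (f a - f b) ≤
      deriv f a * (1 / (4 * M * R) * (a - b)) -
        (2 * Real.exp 1)⁻¹ * (deriv (deriv f) a * (1 / (4 * M * R) * (a - b)) ^ 2) := by
  have hRpos : 0 < R := lt_of_lt_of_le (by positivity) hR
  have h2MR : 1 ≤ R * (2 * M) := (div_le_iff₀ (by positivity)).mp hR
  set η : ℝ := 1 / (4 * M * R) with hη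
  have hη0 : 0 < η := by positivity
  have hη1 : η ≤ 1 / 2 := by
    rw [hη, div_le_div_iff₀ (by positivity) (by norm_num)]
    nlinarith
  set t : ℝ := η * (b - a) with htdef
  have hab : |b - a| ≤ 2 * R := (abs_sub _ _).trans (by linarith)
  have ηkey : η * (2 * R) = 1 / (2 * M) := by
    rw [hη]; field_simp; ring
  have ht : |t| ≤ 1 / (2 * M) := by
    rw [htdef, abs_mul, abs_of_pos hη0, ← ηkey]
    exact mul_le_mul_of_nonneg_left hab hη0.le
  have key := taylor_lb hM hf hqsc a t ht
  have hcx := hconv.2 (Set.mem_univ a) (Set.mem_univ b) (by linarith : (0:ℝ) ≤ 1 - η)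
    hη0.le (by ring)
  simp only [smul_eq_mul] at hcx
  have hat : a + t = (1 - η) * a + η * b := by rw [htdef]; ring
  rw [hat] at key
  have goal' : η * (f a - f b) ≤
      -(deriv f a * t) - (2 * Real.exp 1)⁻¹ * (deriv (deriv f) a * t ^ 2) := by
    nlinarith [key, hcx]
  have e1 : deriv f a * (η * (a - b)) -
      (2 * Real.exp 1)⁻¹ * (deriv (deriv f) a * (η * (a - b)) ^ 2) =
      -(deriv f a * t) - (2 * Real.exp 1)⁻¹ * (deriv (deriv f) a * t ^ 2) := by
    rw [htdef]; ring
  rw [e1]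
  exact goal'

lemma feas_coord {M R η p q : ℝ} (hM : 0 < M) (hRpos : 0 < R) (hη0 : 0 < η)
    (hη1 : η ≤ 1 / 2) (ηkey : η * (2 * R) = 1 / (2 * M))
    (hp : -R ≤ p) (hp' : p ≤ R) (hq : -R ≤ q) (hq' : q ≤ R) :
    |η * (p - q) - (if p - 1 / (2 * M) < -R then -(1 / (2 * M)) + R + p
      else if R < p + 1 / (2 * M) then -R + p + 1 / (2 * M) else 0)| ≤ 1 / (2 * M) := by
  have hb1 : η * (-(2 * R)) ≤ η * (p - q) := mul_le_mul_of_nonneg_left (by linarith) hη0.le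
  have hb2 : η * (p - q) ≤ η * (2 * R) := mul_le_mul_of_nonneg_left (by linarith) hη0.le
  split_ifs with h1 h2
  · rw [abs_le]
    constructor
    · nlinarith [hb1, ηkey]
    · have hb3 : η * (p - q) ≤ η * (p + R) :=
        mul_le_mul_of_nonneg_left (by linarith) hη0.le
      have hb4 : η * (p + R) ≤ p + R := by nlinarith
      nlinarith
  · rw [abs_le]
    constructor
    · have hb3 : η * (p - R) ≤ η * (p - q) :=
        mul_le_mul_of_nonneg_left (by linarith) hη0.le
      have hb4 : p - R ≤ η * (p - R) := by nlinarith
      nlinarith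
    · nlinarith [hb2, ηkey]
  · rw [abs_le]
    constructor
    · nlinarith [hb1, ηkey]
    · nlinarith [hb2, ηkey]



open scoped BigOperators

/-- The shift vector z(x) of the residual problem. -/
noncomputable def zShift (m n : ℕ) (P : Matrix (Fin m) (Fin n) ℝ)
    (M R : ℝ) (x : Fin n → ℝ) : Fin m → ℝ := fun i =>
  if (P.mulVec x) i - 1 / (2 * M) < -R then
    -(1 / (2 * M)) + R + (P.mulVec x) i
  else if R < (P.mulVec x) i + 1 / (2 * M) then
    -R + (P.mulVec x) i + 1 / (2 * M)
  else 0

/-- The residual objective res_x(Δ) (with the corrected constant (2e)⁻¹). -/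
noncomputable def resObj (m n : ℕ) (P : Matrix (Fin m) (Fin n) ℝ)
    (f : ℝ → ℝ) (x Δ : Fin n → ℝ) : ℝ :=
  (∑ i, deriv f ((P.mulVec x) i) * (P.mulVec Δ) i) -
    (2 * Real.exp 1)⁻¹ * ∑ i, deriv (deriv f) ((P.mulVec x) i) * (P.mulVec Δ) i ^ 2

/-- Lemma B.4: the optimal residual value is at least (1/(4MR))·(F(Px) − F(Px*)). -/
theorem residual_lower_bound
    (d n m : ℕ) (A : Matrix (Fin d) (Fin n) ℝ) (b : Fin d → ℝ)
    (P : Matrix (Fin m) (Fin n) ℝ) (M R : ℝ) (hM : 0 < M) (hR : 1 / (2 * M) ≤ R)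
    (f : ℝ → ℝ) (hconv : ConvexOn ℝ Set.univ f) (hf : ContDiff ℝ 3 f)
    (hqsc : ∀ s : ℝ, |deriv (deriv (deriv f)) s| ≤ M * deriv (deriv f) s)
    (xstar : Fin n → ℝ) (hxsA : A.mulVec xstar = b)
    (hxsR : ‖P.mulVec xstar‖ ≤ R)
    (hxsopt : ∀ x' : Fin n → ℝ, A.mulVec x' = b →
      (∑ i, f ((P.mulVec xstar) i)) ≤ ∑ i, f ((P.mulVec x') i))
    (x : Fin n → ℝ) (hxA : A.mulVec x = b) (hxR : ‖P.mulVec x‖ ≤ R) :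
    sSup {v : ℝ | ∃ Δ : Fin n → ℝ, A.mulVec Δ = 0 ∧
        ‖P.mulVec Δ - zShift m n P M R x‖ ≤ 1 / (2 * M) ∧
        v = resObj m n P f x Δ} ≥
      1 / (4 * M * R) *
        ((∑ i, f ((P.mulVec x) i)) - ∑ i, f ((P.mulVec xstar) i)) := by
  have hRpos : 0 < R := lt_of_lt_of_le (by positivity) hR
  have h2MR : 1 ≤ R * (2 * M) := (div_le_iff₀ (by positivity)).mp hR
  have hg0 : ∀ s, 0 ≤ deriv (deriv f) s := fun s =>
    nonneg_of_mul_nonneg_right ((abs_nonneg _).trans (hqsc s)) hM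
  set η : ℝ := 1 / (4 * M * R) with hη
  have hη0 : 0 < η := by positivity
  have hη1 : η ≤ 1 / 2 := by
    rw [hη, div_le_div_iff₀ (by positivity) (by norm_num)]
    nlinarith
  have ηkey : η * (2 * R) = 1 / (2 * M) := by rw [hη]; field_simp; ring
  have hui : ∀ i, |P.mulVec x i| ≤ R := fun i => by
    have := norm_le_pi_norm (P.mulVec x) i
    rw [Real.norm_eq_abs] at this; exact this.trans hxR
  have hvi : ∀ i, |P.mulVec xstar i| ≤ R := fun i => by
    have := norm_le_pi_norm (P.mulVec xstar) i
    rw [Real.norm_eq_abs] at this; exact this.trans hxsR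
  set Δ : Fin n → ℝ := η • (x - xstar) with hΔ
  have hPΔ : ∀ i, P.mulVec Δ i = η * (P.mulVec x i - P.mulVec xstar i) := by
    intro i
    rw [hΔ, Matrix.mulVec_smul, Matrix.mulVec_sub]
    simp [smul_eq_mul]
  have hAΔ : A.mulVec Δ = 0 := by
    rw [hΔ, Matrix.mulVec_smul, Matrix.mulVec_sub, hxA, hxsA]
    simp
  -- feasibility
  have hfeas : ‖P.mulVec Δ - zShift m n P M R x‖ ≤ 1 / (2 * M) := by
    rw [pi_norm_le_iff_of_nonneg (by positivity)]
    intro i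
    rw [Real.norm_eq_abs, Pi.sub_apply, hPΔ i]
    have hpR := abs_le.mp (hui i)
    have hqR := abs_le.mp (hvi i)
    simp only [zShift]
    exact feas_coord hM hRpos hη0 hη1 ηkey hpR.1 hpR.2 hqR.1 hqR.2
  -- membership
  have hmem : resObj m n P f x Δ ∈ {v : ℝ | ∃ Δ : Fin n → ℝ, A.mulVec Δ = 0 ∧
      ‖P.mulVec Δ - zShift m n P M R x‖ ≤ 1 / (2 * M) ∧
      v = resObj m n P f x Δ} := ⟨Δ, hAΔ, hfeas, rfl⟩
  -- bounded above
  have hBdd : BddAbove {v : ℝ | ∃ Δ : Fin n → ℝ, A.mulVec Δ = 0 ∧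
      ‖P.mulVec Δ - zShift m n P M R x‖ ≤ 1 / (2 * M) ∧
      v = resObj m n P f x Δ} := by
    refine ⟨∑ i, |deriv f (P.mulVec x i)| * (1 / (2 * M) + ‖zShift m n P M R x‖), ?_⟩
    rintro w ⟨Δ', hA', hfe', rfl⟩
    unfold resObj
    have hterm : ∀ i, deriv f (P.mulVec x i) * (P.mulVec Δ') i ≤
        |deriv f (P.mulVec x i)| * (1 / (2 * M) + ‖zShift m n P M R x‖) := by
      intro i
      have h2 : |(P.mulVec Δ' - zShift m n P M R x) i| ≤ 1 / (2 * M) := by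
        have := norm_le_pi_norm (P.mulVec Δ' - zShift m n P M R x) i
        rw [Real.norm_eq_abs] at this; exact this.trans hfe'
      have h3 : |zShift m n P M R x i| ≤ ‖zShift m n P M R x‖ := by
        have := norm_le_pi_norm (zShift m n P M R x) i
        rwa [Real.norm_eq_abs] at this
      have h4 : (P.mulVec Δ') i =
          (P.mulVec Δ' - zShift m n P M R x) i + zShift m n P M R x i := by simp
      have h1 : |(P.mulVec Δ') i| ≤ 1 / (2 * M) + ‖zShift m n P M R x‖ := by
        rw [h4]; exact (abs_add_le _ _).trans (by linarith)
      calc deriv f (P.mulVec x i) * (P.mulVec Δ') i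
          ≤ |deriv f (P.mulVec x i) * (P.mulVec Δ') i| := le_abs_self _
        _ = |deriv f (P.mulVec x i)| * |(P.mulVec Δ') i| := abs_mul _ _
        _ ≤ |deriv f (P.mulVec x i)| * (1 / (2 * M) + ‖zShift m n P M R x‖) :=
            mul_le_mul_of_nonneg_left h1 (abs_nonneg _)
    have hquad : 0 ≤ (2 * Real.exp 1)⁻¹ *
        ∑ i, deriv (deriv f) (P.mulVec x i) * (P.mulVec Δ') i ^ 2 :=
      mul_nonneg (by positivity)
        (Finset.sum_nonneg fun i _ => mul_nonneg (hg0 _) (sq_nonneg _))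
    have hsum : ∑ i, deriv f (P.mulVec x i) * (P.mulVec Δ') i ≤
        ∑ i, |deriv f (P.mulVec x i)| * (1 / (2 * M) + ‖zShift m n P M R x‖) :=
      Finset.sum_le_sum (fun i _ => hterm i)
    linarith
  -- main estimate
  have hmain : η * ((∑ i, f (P.mulVec x i)) - ∑ i, f (P.mulVec xstar i)) ≤
      resObj m n P f x Δ := by
    unfold resObj
    simp only [hPΔ]
    calc η * ((∑ i, f (P.mulVec x i)) - ∑ i, f (P.mulVec xstar i))
        = ∑ i, η * (f (P.mulVec x i) - f (P.mulVec xstar i)) := by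
          rw [← Finset.sum_sub_distrib, Finset.mul_sum]
      _ ≤ ∑ i, (deriv f (P.mulVec x i) * (η * (P.mulVec x i - P.mulVec xstar i)) -
            (2 * Real.exp 1)⁻¹ * (deriv (deriv f) (P.mulVec x i) *
              (η * (P.mulVec x i - P.mulVec xstar i)) ^ 2)) :=
          Finset.sum_le_sum fun i _ => coord_ineq hM hR hconv hf hqsc (hui i) (hvi i)
      _ = (∑ i, deriv f (P.mulVec x i) * (η * (P.mulVec x i - P.mulVec xstar i))) -
            (2 * Real.exp 1)⁻¹ * ∑ i, deriv (deriv f) (P.mulVec x i) *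
              (η * (P.mulVec x i - P.mulVec xstar i)) ^ 2 := by
          rw [Finset.sum_sub_distrib, Finset.mul_sum]
  exact le_trans hmain (le_csSup hBdd hmem)
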